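/- Fix real constants R, c, ε > 0 and define, on the open set of points (ρ, u, θ, σ) ∈ ℝ⁴ with ρ > 0 and θ > 0, the function λ(ρ,u,θ,σ) = u − √(Rθ + θ/(ερ²) + (R²ρ²θ + 2Rρσ + σ²/θ)/(ρ²c)). Then at any point (ρ*, u*, θ*, 0) with ρ*, θ* > 0, λ is differentiable and its directional derivative in the direction r = (ερ*²/θ*, −ερ*μ*/θ*, εRρ*/c, 1), where μ* = √(Rθ* + R²θ*/c + θ*/(ερ*²)), is strictly negative (in particular nonzero). -/

import Mathlib

open Real

set_option maxHeartbeats 1000000 in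
/-- Genuine nonlinearity at equilibrium for Ruggeri's hyperbolic Navier–Stokes
system without heat conduction: the characteristic speed
`λ(ρ,u,θ,σ) = u − √(Rθ + θ/(ερ²) + (R²ρ²θ + 2Rρσ + σ²/θ)/(ρ²c))` is
differentiable at every equilibrium point `(ρ*, u*, θ*, 0)` with `ρ*, θ* > 0`,
and its directional derivative in the direction of the right eigenvector
`r = (ερ*²/θ*, −ερ*μ*/θ*, εRρ*/c, 1)` is strictly negative. -/
theorem genuinely_nonlinear_mode_no_heat
    (R c ε : ℝ) (hR : 0 < R) (hc : 0 < c) (hε : 0 < ε)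
    (lam : (Fin 4 → ℝ) → ℝ)
    (hlam : ∀ v : Fin 4 → ℝ, 0 < v 0 → 0 < v 2 →
      lam v = v 1 - Real.sqrt (R * v 2 + v 2 / (ε * (v 0) ^ 2)
        + (R ^ 2 * (v 0) ^ 2 * v 2 + 2 * R * (v 0) * (v 3) + (v 3) ^ 2 / v 2)
            / ((v 0) ^ 2 * c)))
    (ρs us θs : ℝ) (hρs : 0 < ρs) (hθs : 0 < θs)
    (μs : ℝ) (hμs : μs = Real.sqrt (R * θs + R ^ 2 * θs / c + θs / (ε * ρs ^ 2))) :
    DifferentiableAt ℝ lam ![ρs, us, θs, 0] ∧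
      (fderiv ℝ lam ![ρs, us, θs, 0])
          ![ε * ρs ^ 2 / θs, -(ε * ρs * μs) / θs, ε * R * ρs / c, 1] < 0 := by
  set pt : Fin 4 → ℝ := ![ρs, us, θs, 0] with hpt
  set a : ℝ := ε * ρs ^ 2 / θs with ha
  set b : ℝ := ε * R * ρs / c with hb
  set r1 : ℝ := -(ε * ρs * μs) / θs with hr1
  set r : Fin 4 → ℝ := ![a, r1, b, 1] with hr
  have hpt0 : pt 0 = ρs := rfl
  have hpt2 : pt 2 = θs := rfl
  have hpt3 : pt 3 = 0 := rfl
  have hμpos : 0 < μs := by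
    rw [hμs]; apply Real.sqrt_pos.mpr; positivity
  have hμ2 : μs ^ 2 = R * θs + R ^ 2 * θs / c + θs / (ε * ρs ^ 2) := by
    rw [hμs, sq_sqrt (by positivity)]
  set g : (Fin 4 → ℝ) → ℝ := fun v => v 1 - Real.sqrt (R * v 2 + v 2 / (ε * (v 0) ^ 2)
        + (R ^ 2 * (v 0) ^ 2 * v 2 + 2 * R * (v 0) * (v 3) + (v 3) ^ 2 / v 2)
            / ((v 0) ^ 2 * c)) with hg
  have h0ev : ∀ᶠ v : Fin 4 → ℝ in nhds pt, 0 < v 0 :=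
    (continuous_apply 0).continuousAt.eventually
      (by show ∀ᶠ y in nhds (pt 0), 0 < y; rw [hpt0]; exact eventually_gt_nhds hρs)
  have h2ev : ∀ᶠ v : Fin 4 → ℝ in nhds pt, 0 < v 2 :=
    (continuous_apply 2).continuousAt.eventually
      (by show ∀ᶠ y in nhds (pt 2), 0 < y; rw [hpt2]; exact eventually_gt_nhds hθs)
  have heq : lam =ᶠ[nhds pt] g := by
    filter_upwards [h0ev, h2ev] with v h0 h2 using hlam v h0 h2
  -- differentiability of the inner expression
  have hF : DifferentiableAt ℝ (fun v : Fin 4 → ℝ => R * v 2 + v 2 / (ε * (v 0) ^ 2)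
        + (R ^ 2 * (v 0) ^ 2 * v 2 + 2 * R * (v 0) * (v 3) + (v 3) ^ 2 / v 2)
            / ((v 0) ^ 2 * c)) pt := by
    simp only [div_eq_mul_inv]
    have h0 : DifferentiableAt ℝ (fun v : Fin 4 → ℝ => v 0) pt := by fun_prop
    have h2 : DifferentiableAt ℝ (fun v : Fin 4 → ℝ => v 2) pt := by fun_prop
    have h3 : DifferentiableAt ℝ (fun v : Fin 4 → ℝ => v 3) pt := by fun_prop
    refine ((h2.const_mul R).add ((h2.mul (DifferentiableAt.inv ((h0.pow 2).const_mul ε) ?_)))).add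
      (((((((h0.pow 2).const_mul (R^2)).mul h2).add ((h0.const_mul (2*R)).mul h3)).add
        ((h3.pow 2).mul (h2.inv ?_))).mul (DifferentiableAt.inv ((h0.pow 2).mul_const c) ?_)))
    · show ε * (pt 0) ^ 2 ≠ 0; rw [hpt0]; positivity
    · show pt 2 ≠ 0; rw [hpt2]; positivity
    · show (pt 0) ^ 2 * c ≠ 0; rw [hpt0]; positivity
  have hFpt : (R * pt 2 + pt 2 / (ε * (pt 0) ^ 2)
        + (R ^ 2 * (pt 0) ^ 2 * pt 2 + 2 * R * (pt 0) * (pt 3) + (pt 3) ^ 2 / pt 2)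
            / ((pt 0) ^ 2 * c)) = μs ^ 2 := by
    rw [hpt0, hpt2, hpt3, hμ2]
    field_simp
    ring
  have hgdiff : DifferentiableAt ℝ g pt := by
    rw [hg]
    exact (by fun_prop : DifferentiableAt ℝ (fun v : Fin 4 → ℝ => v 1) pt).sub
      (hF.sqrt (by show _ ≠ (0:ℝ); rw [hFpt]; positivity))
  have hdiff : DifferentiableAt ℝ lam pt := heq.differentiableAt_iff.mpr hgdiff
  refine ⟨hdiff, ?_⟩
  -- the line through pt in direction r
  have hψ : HasDerivAt (fun t : ℝ => pt + t • r) r 0 := by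
    simpa using ((hasDerivAt_id (0:ℝ)).smul_const r).const_add pt
  have hcomp : HasDerivAt (fun t : ℝ => lam (pt + t • r)) ((fderiv ℝ lam pt) r) 0 := by
    have hF' : HasFDerivAt lam (fderiv ℝ lam pt) (pt + (0:ℝ) • r) := by
      simpa using hdiff.hasFDerivAt
    exact hF'.comp_hasDerivAt 0 hψ
  -- explicit 1D derivative along the line
  have hρt : HasDerivAt (fun t : ℝ => ρs + t * a) a 0 := by
    simpa using ((hasDerivAt_id (0:ℝ)).mul_const a).const_add ρs
  have hθt : HasDerivAt (fun t : ℝ => θs + t * b) b 0 := by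
    simpa using ((hasDerivAt_id (0:ℝ)).mul_const b).const_add θs
  have hσt : HasDerivAt (fun t : ℝ => t) 1 0 := hasDerivAt_id 0
  set A' : ℝ := -2 / ρs + 3 * R / (ρs * c) + ε * R ^ 2 * ρs / c + ε * R ^ 3 * ρs / c ^ 2 with hA'
  have hA : HasDerivAt (fun t : ℝ => R * (θs + t * b) + (θs + t * b) / (ε * (ρs + t * a) ^ 2)
        + (R ^ 2 * (ρs + t * a) ^ 2 * (θs + t * b) + 2 * R * (ρs + t * a) * t + t ^ 2 / (θs + t * b))
            / ((ρs + t * a) ^ 2 * c)) A' 0 := by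
    have h := ((hθt.const_mul R).add
        (hθt.div ((hρt.pow 2).const_mul ε) (by simp only [Pi.pow_apply, zero_mul, add_zero]; positivity))).add
      (((((((hρt.pow 2).const_mul (R ^ 2)).mul hθt).add ((hρt.const_mul (2 * R)).mul hσt)).add
        ((hσt.pow 2).div hθt (by simp only [zero_mul, add_zero]; positivity))))
        |>.div ((hρt.pow 2).mul_const c) (by simp only [Pi.pow_apply, zero_mul, add_zero]; positivity))
    refine h.congr_deriv ?_
    symm
    rw [hA', ha, hb]
    norm_num
    field_simp
    ring
  have hA0 : R * (θs + 0 * b) + (θs + 0 * b) / (ε * (ρs + 0 * a) ^ 2)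
        + (R ^ 2 * (ρs + 0 * a) ^ 2 * (θs + 0 * b) + 2 * R * (ρs + 0 * a) * 0 + 0 ^ 2 / (θs + 0 * b))
            / ((ρs + 0 * a) ^ 2 * c) = μs ^ 2 := by
    rw [hμ2]
    norm_num
    field_simp
    ring
  have hsqrt0 : Real.sqrt (R * (θs + 0 * b) + (θs + 0 * b) / (ε * (ρs + 0 * a) ^ 2)
        + (R ^ 2 * (ρs + 0 * a) ^ 2 * (θs + 0 * b) + 2 * R * (ρs + 0 * a) * 0 + 0 ^ 2 / (θs + 0 * b))
            / ((ρs + 0 * a) ^ 2 * c)) = μs := by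
    rw [hA0, Real.sqrt_sq hμpos.le]
  have hsq : HasDerivAt (fun t : ℝ => Real.sqrt (R * (θs + t * b) + (θs + t * b) / (ε * (ρs + t * a) ^ 2)
        + (R ^ 2 * (ρs + t * a) ^ 2 * (θs + t * b) + 2 * R * (ρs + t * a) * t + t ^ 2 / (θs + t * b))
            / ((ρs + t * a) ^ 2 * c))) (A' / (2 * μs)) 0 := by
    have h2 := hA.sqrt (by show _ ≠ (0:ℝ); rw [hA0]; positivity)
    convert h2 using 3
    exact hsqrt0.symm
  have hlin : HasDerivAt (fun t : ℝ => us + t * r1) r1 0 := by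
    simpa using ((hasDerivAt_id (0:ℝ)).mul_const r1).const_add us
  have hφ : HasDerivAt (fun t : ℝ => (us + t * r1) - Real.sqrt (R * (θs + t * b)
        + (θs + t * b) / (ε * (ρs + t * a) ^ 2)
        + (R ^ 2 * (ρs + t * a) ^ 2 * (θs + t * b) + 2 * R * (ρs + t * a) * t + t ^ 2 / (θs + t * b))
            / ((ρs + t * a) ^ 2 * c))) (r1 - A' / (2 * μs)) 0 := hlin.sub hsq
  -- the composed function agrees with the explicit 1D function near 0
  have hT : Filter.Tendsto (fun t : ℝ => pt + t • r) (nhds 0) (nhds pt) := by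
    have hcont : Continuous (fun t : ℝ => pt + t • r) := by fun_prop
    have := hcont.tendsto 0
    simpa using this
  have hev : (fun t : ℝ => lam (pt + t • r)) =ᶠ[nhds 0] (fun t : ℝ => (us + t * r1)
      - Real.sqrt (R * (θs + t * b) + (θs + t * b) / (ε * (ρs + t * a) ^ 2)
        + (R ^ 2 * (ρs + t * a) ^ 2 * (θs + t * b) + 2 * R * (ρs + t * a) * t + t ^ 2 / (θs + t * b))
            / ((ρs + t * a) ^ 2 * c))) := by
    filter_upwards [hT.eventually h0ev, hT.eventually h2ev] with t h0 h2
    rw [hlam _ h0 h2]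
    simp [hpt, hr, Matrix.cons_val_zero, Matrix.cons_val_one, Matrix.head_cons,
      Matrix.cons_val_two, Matrix.tail_cons, Matrix.cons_val_three]
  have hD : (fderiv ℝ lam pt) r = r1 - A' / (2 * μs) :=
    hcomp.unique (hφ.congr_of_eventuallyEq hev)
  rw [hD]
  -- final inequality
  have hμ2c : μs ^ 2 * (ε * ρs ^ 2 * c) = R * θs * (ε * ρs ^ 2 * c) + R ^ 2 * θs * (ε * ρs ^ 2) + θs * c := by
    rw [hμ2]; field_simp
  rw [hr1, hA', sub_lt_zero, div_lt_div_iff₀ (by positivity) (by positivity : (0:ℝ) < 2 * μs)]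
  field_simp
  have hkey : μs ^ 2 * (2 * ρs ^ 3 * c ^ 4 * ε)
      = (R * θs * (ε * ρs ^ 2 * c) + R ^ 2 * θs * (ε * ρs ^ 2) + θs * c) * (2 * ρs * c ^ 3) := by
    linear_combination (2 * ρs * c ^ 3) * hμ2c
  have p1 : 0 < θs * (R * ρs * c ^ 3) := by positivity
  have p2 : 0 < θs * (ε * R ^ 2 * ρs ^ 3 * c ^ 3) := by positivity
  have p3 : 0 < θs * (ε * R ^ 3 * ρs ^ 3 * c ^ 2) := by positivity
  have p4 : 0 < θs * (ε * R * ρs ^ 3 * c ^ 4) := by positivity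
  nlinarith [hkey, p1, p2, p3, p4, hμ2c, hc, (by positivity : (0:ℝ) < R * c * θs),
    (by positivity : (0:ℝ) < ε * ρs ^ 2 * R ^ 2 * c * θs), (by positivity : (0:ℝ) < ε * ρs ^ 2 * R ^ 3 * θs),
    (by positivity : (0:ℝ) < R * θs * ε * ρs ^ 2 * c ^ 2)]
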